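/- For every d ∈ ℕ there exists a countably infinite graph H_d which is simultaneously d-wise intersecting, d-degenerate, and 0-ruled. -/

import Mathlib

theorem stmt_18 (d : ℕ) :
    ∃ H : SimpleGraph ℕ,
      (∀ S : Finset ℕ, S.card ≤ d → {w : ℕ | ∀ v ∈ S, H.Adj w v}.Infinite) ∧
      (∃ e : ℕ ≃ ℕ, ∀ i : ℕ, {j : ℕ | j < i ∧ H.Adj (e i) (e j)}.ncard ≤ d) ∧
      (∀ F : Finset ℕ, ∃ v : ℕ, v ∉ F ∧ ∀ u ∈ F, ¬ H.Adj v u) := by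
  obtain ⟨p, hp⟩ := exists_surjective_nat (Finset ℕ)
  set g : ℕ → Finset ℕ := fun n =>
    if (p n.unpair.1).card ≤ d ∧ ∀ x ∈ p n.unpair.1, x < n then p n.unpair.1 else ∅
    with hg
  have hlt : ∀ n x, x ∈ g n → x < n := by
    intro n x hx
    simp only [hg] at hx
    split_ifs at hx with h
    · exact h.2 x hx
    · simp at hx
  have hcard : ∀ n, (g n).card ≤ d := by
    intro n
    simp only [hg]
    split_ifs with h
    · exact h.1
    · simp
  have hocc : ∀ S : Finset ℕ, S.card ≤ d → ∀ m : ℕ, ∃ n, m < n ∧ g n = S := by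
    intro S hS m
    obtain ⟨a, ha⟩ := hp S
    set b := max (m + 1) (S.sup id + 1) with hb
    refine ⟨Nat.pair a b, ?_, ?_⟩
    · calc m < m + 1 := Nat.lt_succ_self m
        _ ≤ b := le_max_left _ _
        _ ≤ Nat.pair a b := Nat.right_le_pair a b
    · have hx : ∀ x ∈ S, x < Nat.pair a b := by
        intro x hx
        have : x ≤ S.sup id := Finset.le_sup (f := id) hx
        calc x ≤ S.sup id := this
          _ < S.sup id + 1 := Nat.lt_succ_self _
          _ ≤ b := le_max_right _ _
          _ ≤ Nat.pair a b := Nat.right_le_pair a b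
      simp only [hg, Nat.unpair_pair, ha]
      rw [if_pos ⟨hS, hx⟩]
  refine ⟨⟨fun u v => u ∈ g v ∨ v ∈ g u, ?_, ?_⟩, ?_, ?_, ?_⟩
  · constructor; intro u v h; tauto
  · constructor; intro u h
    rcases h with h | h <;> exact absurd (hlt u u h) (lt_irrefl u)
  · -- d-wise intersecting
    intro S hS
    apply Set.infinite_of_not_bddAbove
    rintro ⟨m, hm⟩
    obtain ⟨n, hmn, hgn⟩ := hocc S hS m
    exact absurd (hm (fun v hv => Or.inr (by rw [hgn]; exact hv))) (not_le.mpr hmn)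
  · -- d-degenerate with identity enumeration
    refine ⟨Equiv.refl ℕ, fun i => ?_⟩
    have hsub : {j : ℕ | j < i ∧ ((Equiv.refl ℕ) i ∈ g ((Equiv.refl ℕ) j) ∨
        (Equiv.refl ℕ) j ∈ g ((Equiv.refl ℕ) i))} ⊆ ↑(g i) := by
      rintro j ⟨hj, h | h⟩
      · exact absurd (hlt j i h) (not_lt.mpr hj.le)
      · exact h
    calc _ ≤ (↑(g i) : Set ℕ).ncard := Set.ncard_le_ncard hsub (Finset.finite_toSet _)
      _ = (g i).card := Set.ncard_coe_finset _
      _ ≤ d := hcard i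
  · -- 0-ruled
    intro F
    set M := (F ∪ F.sup g).sup id with hM
    obtain ⟨n, hn, hgn⟩ := hocc ∅ (Nat.zero_le d) M
    have hnotmem : ∀ x ∈ F ∪ F.sup g, x < n := by
      intro x hx
      exact lt_of_le_of_lt (Finset.le_sup (f := id) hx) hn
    refine ⟨n, ?_, ?_⟩
    · intro h
      exact absurd (hnotmem n (Finset.mem_union_left _ h)) (lt_irrefl n)
    · rintro u hu (h | h)
      · -- n ∈ g u : but elements of g u are < u ≤ M < n, contradiction with n ∈ g u? need n < u
        have hun : u < n := hnotmem u (Finset.mem_union_left _ hu)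
        have : n < u := hlt u n h
        omega
      · rw [hgn] at h
        simp at h
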